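/- The determinant of the distance matrix of a tree on n vertices depends only on n, not on the structure of the tree: any two trees on n vertices have distance matrices with the same determinant. -/

import Mathlib

section Aux

open SimpleGraph

variable {V : Type} [Fintype V] [DecidableEq V]

/-- Every finite tree with at least two vertices has a leaf. -/
lemma tree_exists_leaf (G : SimpleGraph V) (hT : G.IsTree) (h2 : 2 ≤ Fintype.card V) :
    ∃ v u, G.Adj v u ∧ ∀ x, G.Adj v x → x = u := by
  classical
  by_contra hcon
  push_neg at hcon
  -- every vertex has a neighbor
  have hnb : ∀ v : V, ∃ u, G.Adj v u := by
    intro v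
    obtain ⟨w, hw⟩ := Fintype.exists_ne_of_one_lt_card (by omega) v
    obtain ⟨p⟩ := hT.isConnected v w
    cases p with
    | nil => exact absurd rfl hw.symm
    | cons h q => exact ⟨_, h⟩
  -- every vertex has degree at least 2
  have hdeg : ∀ v : V, 2 ≤ G.degree v := by
    intro v
    obtain ⟨u, hu⟩ := hnb v
    obtain ⟨x, hx, hxu⟩ := hcon v u hu
    rw [← SimpleGraph.card_neighborFinset_eq_degree]
    refine Finset.one_lt_card.mpr ⟨x, ?_, u, ?_, hxu⟩ <;>
      simp [SimpleGraph.mem_neighborFinset, hx, hu]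
  have hsum := G.sum_degrees_eq_twice_card_edges
  have hE := hT.card_edgeFinset
  have : 2 * Fintype.card V ≤ ∑ v, G.degree v := by
    rw [two_mul]
    calc Fintype.card V + Fintype.card V
        = ∑ _v : V, 1 + ∑ _v : V, 1 := by simp
      _ ≤ ∑ v, G.degree v := by
          rw [← Finset.sum_add_distrib]
          exact Finset.sum_le_sum fun v _ => hdeg v
  omega

/-- Walks can avoid a leaf without getting longer. -/
lemma avoid_leaf {G : SimpleGraph V} {v u : V} (hu : ∀ x, G.Adj v x → x = u) :
    ∀ (m : ℕ) {a b : V} (p : G.Walk a b), p.length ≤ m → a ≠ v → b ≠ v →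
      ∃ q : G.Walk a b, v ∉ q.support ∧ q.length ≤ p.length := by
  intro m
  induction m with
  | zero =>
    intro a b p hp ha hb
    cases p with
    | nil => exact ⟨.nil, by simp [Ne.symm ha], le_rfl⟩
    | cons h q => simp at hp
  | succ m IH =>
    intro a b p hp ha hb
    cases p with
    | nil => exact ⟨.nil, by simp [Ne.symm ha], le_rfl⟩
    | @cons _ c _ h q =>
      by_cases hc : c = v
      · subst hc
        have hau : a = u := hu a h.symm
        cases q with
        | nil => exact absurd rfl hb
        | @cons _ d _ h' r =>
          have hd : d = u := hu d h'
          have hda : d = a := hd.trans hau.symm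
          subst hda
          have hr : r.length ≤ m := by
            simp only [SimpleGraph.Walk.length_cons] at hp
            omega
          obtain ⟨q', hq', hlen⟩ := IH r hr ha hb
          exact ⟨q', hq', by simp only [SimpleGraph.Walk.length_cons]; omega⟩
      · have hq : q.length ≤ m := by
          simp only [SimpleGraph.Walk.length_cons] at hp; omega
        obtain ⟨q', hq', hlen⟩ := IH q hq hc hb
        refine ⟨.cons h q', ?_, by simp only [SimpleGraph.Walk.length_cons]; omega⟩
        simp only [SimpleGraph.Walk.support_cons, List.mem_cons]
        rintro (rfl | hm)
        · exact ha rfl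
        · exact hq' hm

set_option linter.unusedSectionVars false

/-- Transfer a walk avoiding a forbidden set into the induced subgraph. -/
lemma walk_to_induce {G : SimpleGraph V} {s : Set V} :
    ∀ {a b : V} (p : G.Walk a b) (_ : ∀ x ∈ p.support, x ∈ s) (ha : a ∈ s) (hb : b ∈ s),
      ∃ q : (G.induce s).Walk ⟨a, ha⟩ ⟨b, hb⟩, q.length = p.length := by
  intro a b p
  induction p with
  | nil => intro _ _ _; exact ⟨.nil, rfl⟩
  | @cons a c b h q IH =>
    intro hs ha hb
    have hcs : c ∈ s := hs c (by simp)
    obtain ⟨q', hq'⟩ := IH (fun x hx => hs x (by simp [hx])) hcs hb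
    have hadj : (G.induce s).Adj ⟨a, ha⟩ ⟨c, hcs⟩ := h
    exact ⟨.cons hadj q', by simp [hq']⟩

/-- Transfer a walk in the induced subgraph back to the graph. -/
lemma walk_of_induce {G : SimpleGraph V} {s : Set V} :
    ∀ {a b : ↥s} (q : (G.induce s).Walk a b),
      ∃ p : G.Walk a.val b.val, p.length = q.length := by
  intro a b q
  induction q with
  | nil => exact ⟨.nil, rfl⟩
  | @cons a c b h q IH =>
    obtain ⟨p, hp⟩ := IH
    exact ⟨.cons h p, congrArg (· + 1) hp⟩

section leaf
variable {G : SimpleGraph V} {v u : V}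

lemma mem_compl_of_avoid {p : G.Walk a b} (hp : v ∉ p.support) :
    ∀ x ∈ p.support, x ∈ ({v}ᶜ : Set V) := by
  intro x hx
  simp only [Set.mem_compl_iff, Set.mem_singleton_iff]
  rintro rfl; exact hp hx

/-- Distance to a leaf goes through its unique neighbor. -/
lemma dist_leaf (hT : G.IsTree) (hadj : G.Adj v u) (hu : ∀ x, G.Adj v x → x = u)
    {w : V} (hw : w ≠ v) : G.dist v w = G.dist u w + 1 := by
  have hle : G.dist v w ≤ G.dist u w + 1 := by
    have h1 : G.dist v u = 1 := SimpleGraph.dist_eq_one_iff_adj.2 hadj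
    have := hT.isConnected.dist_triangle (u := v) (v := u) (w := w)
    omega
  have hge : G.dist u w + 1 ≤ G.dist v w := by
    obtain ⟨p, hp⟩ := (hT.isConnected v w).exists_walk_length_eq_dist
    cases p with
    | nil => exact absurd rfl hw.symm
    | @cons _ c _ h q =>
      have hc : c = u := hu c h
      subst hc
      have := SimpleGraph.dist_le q
      simp only [SimpleGraph.Walk.length_cons] at hp
      omega
  omega

/-- Distances in the tree minus a leaf agree with distances in the tree. -/
lemma dist_induce_leaf (hT : G.IsTree) (hu : ∀ x, G.Adj v x → x = u)
    {a b : ↥({v}ᶜ : Set V)} :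
    (G.induce ({v}ᶜ : Set V)).dist a b = G.dist a.val b.val := by
  have ha : a.val ≠ v := a.2
  have hb : b.val ≠ v := b.2
  obtain ⟨p, hp⟩ := (hT.isConnected a.val b.val).exists_walk_length_eq_dist
  obtain ⟨p', hp'v, hp'len⟩ := avoid_leaf hu p.length p le_rfl ha hb
  obtain ⟨q, hq⟩ := walk_to_induce p' (mem_compl_of_avoid hp'v) a.2 b.2
  have hle : (G.induce ({v}ᶜ : Set V)).dist a b ≤ q.length := by
    have h := SimpleGraph.dist_le q
    simpa only [Subtype.coe_eta] using h
  have hge : G.dist a.val b.val ≤ (G.induce ({v}ᶜ : Set V)).dist a b := by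
    have hr : (G.induce ({v}ᶜ : Set V)).Reachable a b := by
      have : (G.induce ({v}ᶜ : Set V)).Reachable ⟨a.val, a.2⟩ ⟨b.val, b.2⟩ := ⟨q⟩
      simpa only [Subtype.coe_eta] using this
    obtain ⟨q', hq'⟩ := hr.exists_walk_length_eq_dist
    obtain ⟨p'', hp''⟩ := walk_of_induce q'
    have := SimpleGraph.dist_le p''
    omega
  omega

/-- Removing a leaf from a tree yields a tree. -/
lemma induce_leaf_isTree (hT : G.IsTree) (hadj : G.Adj v u) (hu : ∀ x, G.Adj v x → x = u) :
    (G.induce ({v}ᶜ : Set V)).IsTree := by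
  refine ⟨(SimpleGraph.connected_iff _).mpr ⟨?_, ?_⟩, ?_⟩
  · intro a b
    have ha : a.val ≠ v := a.2
    have hb : b.val ≠ v := b.2
    obtain ⟨p⟩ := hT.isConnected a.val b.val
    obtain ⟨p', hp'v, _⟩ := avoid_leaf hu p.length p le_rfl ha hb
    obtain ⟨q, _⟩ := walk_to_induce p' (mem_compl_of_avoid hp'v) a.2 b.2
    have : (G.induce ({v}ᶜ : Set V)).Reachable ⟨a.val, a.2⟩ ⟨b.val, b.2⟩ := ⟨q⟩
    simpa only [Subtype.coe_eta] using this
  · exact ⟨⟨u, by simp [hadj.ne']⟩⟩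
  · intro a c hc
    have hinj : Function.Injective
        (fun x : ↥({v}ᶜ : Set V) => x.val) := Subtype.val_injective
    let f : G.induce ({v}ᶜ : Set V) →g G := ⟨fun x => x.val, fun h => h⟩
    exact hT.IsAcyclic (c.map f) (hc.map hinj)

end leaf

open Matrix

/-- Distance matrix of `G` bordered by `k` rows/columns of ones with `-2·I` corner. -/
noncomputable def bmat (G : SimpleGraph V) (k : ℕ) : Matrix (V ⊕ Fin k) (V ⊕ Fin k) ℤ :=
  Matrix.of fun i j =>
    match i, j with
    | Sum.inl a, Sum.inl b => (G.dist a b : ℤ)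
    | Sum.inl _, Sum.inr _ => 1
    | Sum.inr _, Sum.inl _ => 1
    | Sum.inr a, Sum.inr b => if a = b then -2 else 0

/-- The reindexing equivalence used when removing a leaf. -/
def leafEquiv (v : V) (k : ℕ) : (↥({v}ᶜ : Set V) ⊕ Fin (k + 1)) ≃ (V ⊕ Fin k) where
  toFun x :=
    match x with
    | Sum.inl a => Sum.inl a.val
    | Sum.inr i => if h : (i : ℕ) < k then Sum.inr ⟨i, h⟩ else Sum.inl v
  invFun y :=
    match y with
    | Sum.inl b => if h : b = v then Sum.inr (Fin.last k) else Sum.inl ⟨b, h⟩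
    | Sum.inr j => Sum.inr j.castSucc
  left_inv x := by
    match x with
    | Sum.inl a =>
      have : a.val ≠ v := a.2
      simp [this]
    | Sum.inr i =>
      by_cases h : (i : ℕ) < k
      · simp [h]
      · have : i = Fin.last k := by
          apply Fin.ext; have := i.isLt; simp; omega
        simp [h, this]
  right_inv y := by
    match y with
    | Sum.inl b =>
      by_cases h : b = v
      · subst h; simp
      · simp [h]
    | Sum.inr j =>
      have : (j.castSucc : ℕ) < k := j.isLt
      simp [this]

@[simp] lemma leafEquiv_inl (v : V) (k : ℕ) (a : ↥({v}ᶜ : Set V)) :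
    leafEquiv v k (Sum.inl a) = Sum.inl a.val := rfl

lemma leafEquiv_inr (v : V) (k : ℕ) (i : Fin (k + 1)) :
    leafEquiv v k (Sum.inr i)
      = if h : (i : ℕ) < k then Sum.inr ⟨i, h⟩ else Sum.inl v := rfl

lemma bmat_step (G : SimpleGraph V) (hT : G.IsTree) {v u : V} (hadj : G.Adj v u)
    (hu : ∀ x, G.Adj v x → x = u) (k : ℕ) :
    (bmat G k).det = (bmat (G.induce ({v}ᶜ : Set V)) (k + 1)).det := by
  classical
  set M := bmat G k with hM
  have hne : (Sum.inl v : V ⊕ Fin k) ≠ Sum.inl u := by simp [hadj.ne]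
  set M₁ := M.updateRow (Sum.inl v) (M (Sum.inl v) + (-1 : ℤ) • M (Sum.inl u)) with hM₁
  set M₂ := M₁.updateCol (Sum.inl v)
    (fun i => M₁ i (Sum.inl v) + (-1 : ℤ) • M₁ i (Sum.inl u)) with hM₂
  have h1 : M₁.det = M.det := det_updateRow_add_smul_self M hne (-1)
  have h2 : M₂.det = M₁.det := det_updateCol_add_smul_self M₁ hne (-1)
  -- distance facts
  have dvu : G.dist v u = 1 := SimpleGraph.dist_eq_one_iff_adj.2 hadj
  have duv : G.dist u v = 1 := by rw [SimpleGraph.dist_comm]; exact dvu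
  have dvv : G.dist v v = 0 := SimpleGraph.dist_self
  have duu : G.dist u u = 0 := SimpleGraph.dist_self
  have hrow : ∀ w : V, w ≠ v → G.dist v w = G.dist u w + 1 :=
    fun w hw => dist_leaf hT hadj hu hw
  have hcol : ∀ w : V, w ≠ v → G.dist w v = G.dist w u + 1 := by
    intro w hw
    rw [SimpleGraph.dist_comm (u := w) (v := v), SimpleGraph.dist_comm (u := w) (v := u)]
    exact hrow w hw
  have h3 : bmat (G.induce ({v}ᶜ : Set V)) (k + 1)
      = M₂.submatrix (leafEquiv v k) (leafEquiv v k) := by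
    ext x y
    rcases x with a | i <;> rcases y with b | j
    · -- inl inl
      have ha : (a : V) ≠ v := a.2
      have hb : (b : V) ≠ v := b.2
      simp [bmat, hM₂, hM₁, hM, Matrix.updateCol_apply, Matrix.updateRow_apply, ha, hb,
        dist_induce_leaf hT hu]
    · -- inl inr
      have ha : (a : V) ≠ v := a.2
      by_cases hj : (j : ℕ) < k
      · simp [bmat, hM₂, hM₁, hM, leafEquiv_inr, hj,
          Matrix.updateCol_apply, Matrix.updateRow_apply, ha]
      · have hav : G.dist (a : V) v = G.dist (a : V) u + 1 := hcol _ ha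
        have hjlast : j = Fin.last k := by apply Fin.ext; have := j.isLt; simp; omega
        simp only [bmat, hM₂, hM₁, hM, leafEquiv_inr, hj, dif_neg, Matrix.submatrix_apply,
          leafEquiv_inl, Matrix.updateCol_apply, Matrix.updateRow_apply, Matrix.of_apply]
        simp [ha, hav]
    · -- inr inl
      have hb : (b : V) ≠ v := b.2
      by_cases hi : (i : ℕ) < k
      · simp [bmat, hM₂, hM₁, hM, leafEquiv_inr, hi,
          Matrix.updateCol_apply, Matrix.updateRow_apply, hb]
      · have hvb : G.dist v (b : V) = G.dist u (b : V) + 1 := hrow _ hb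
        simp only [bmat, hM₂, hM₁, hM, leafEquiv_inr, hi, dif_neg, Matrix.submatrix_apply,
          leafEquiv_inl, Matrix.updateCol_apply, Matrix.updateRow_apply, Matrix.of_apply]
        simp [hb, hvb]
    · -- inr inr
      by_cases hi : (i : ℕ) < k <;> by_cases hj : (j : ℕ) < k
      · by_cases hij : i = j
        · subst hij
          simp [bmat, hM₂, hM₁, hM, leafEquiv_inr, hi,
            Matrix.updateCol_apply, Matrix.updateRow_apply]
        · have : ¬ (⟨(i : ℕ), hi⟩ : Fin k) = ⟨(j : ℕ), hj⟩ := by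
            simp [Fin.ext_iff]; intro h; exact hij (Fin.ext h)
          simp [bmat, hM₂, hM₁, hM, leafEquiv_inr, hi, hj, hij,
            Matrix.updateCol_apply, Matrix.updateRow_apply, this]
      · have hij : ¬ i = j := by rintro rfl; exact hj hi
        simp [bmat, hM₂, hM₁, hM, leafEquiv_inr, hi, hj, hij,
          Matrix.updateCol_apply, Matrix.updateRow_apply, dvu, duv, dvv, duu]
      · have hij : ¬ i = j := by rintro rfl; exact hi hj
        simp [bmat, hM₂, hM₁, hM, leafEquiv_inr, hi, hj, hij,
          Matrix.updateCol_apply, Matrix.updateRow_apply, dvu, duv, dvv, duu]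
      · have hij : i = j := by
          apply Fin.ext; have := i.isLt; have := j.isLt; omega
        subst hij
        simp [bmat, hM₂, hM₁, hM, leafEquiv_inr, hi,
          Matrix.updateCol_apply, Matrix.updateRow_apply, dvu, duv, dvv, duu]
  rw [h3, det_submatrix_equiv_self, h2, h1]

theorem bmat_det_eq (n : ℕ) : ∀ (k : ℕ) {V₁ : Type} [Fintype V₁] [DecidableEq V₁]
    {V₂ : Type} [Fintype V₂] [DecidableEq V₂]
    (G₁ : SimpleGraph V₁) (G₂ : SimpleGraph V₂),
    G₁.IsTree → G₂.IsTree → Fintype.card V₁ = n → Fintype.card V₂ = n →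
    (bmat G₁ k).det = (bmat G₂ k).det := by
  induction n using Nat.strong_induction_on with
  | _ n IH =>
  intro k V₁ _ _ V₂ _ _ G₁ G₂ h₁ h₂ hc₁ hc₂
  rcases Nat.lt_or_ge n 2 with hn | hn
  · -- n = 1 (n = 0 is impossible)
    have hpos₁ : 0 < Fintype.card V₁ := @Fintype.card_pos _ _ h₁.isConnected.nonempty
    have hn1 : n = 1 := by omega
    have hs₁ : Subsingleton V₁ :=
      Fintype.card_le_one_iff_subsingleton.mp (by omega)
    have hs₂ : Subsingleton V₂ :=
      Fintype.card_le_one_iff_subsingleton.mp (by omega)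
    have e : V₁ ≃ V₂ := Fintype.equivOfCardEq (hc₁.trans hc₂.symm)
    have hmat : bmat G₁ k
        = (bmat G₂ k).submatrix (Equiv.sumCongr e (Equiv.refl (Fin k)))
            (Equiv.sumCongr e (Equiv.refl (Fin k))) := by
      ext x y
      rcases x with a | i <;> rcases y with b | j
      · have hab : a = b := Subsingleton.elim a b
        subst hab
        have heab : e a = e a := rfl
        simp [bmat, SimpleGraph.dist_self]
      · rfl
      · rfl
      · rfl
    rw [hmat, det_submatrix_equiv_self]
  · -- n ≥ 2 : strip a leaf from each tree
    obtain ⟨v₁, u₁, hadj₁, hu₁⟩ := tree_exists_leaf G₁ h₁ (by omega)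
    obtain ⟨v₂, u₂, hadj₂, hu₂⟩ := tree_exists_leaf G₂ h₂ (by omega)
    rw [bmat_step G₁ h₁ hadj₁ hu₁ k, bmat_step G₂ h₂ hadj₂ hu₂ k]
    have hcard₁ : Fintype.card ↥({v₁}ᶜ : Set V₁) = n - 1 := by
      rw [Fintype.card_compl_set, hc₁]
      congr 1
    have hcard₂ : Fintype.card ↥({v₂}ᶜ : Set V₂) = n - 1 := by
      rw [Fintype.card_compl_set, hc₂]
      congr 1
    exact IH (n - 1) (by omega) (k + 1) _ _
      (induce_leaf_isTree h₁ hadj₁ hu₁) (induce_leaf_isTree h₂ hadj₂ hu₂) hcard₁ hcard₂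

end Aux

/-- The determinant of the distance matrix of a tree on `n` vertices does not depend
on the structure of the tree: any two trees on `n` vertices have distance matrices
with the same determinant. -/
theorem det_distance_matrix_tree_independent (n : ℕ)
    (G₁ G₂ : SimpleGraph (Fin n)) (h₁ : G₁.IsTree) (h₂ : G₂.IsTree) :
    (Matrix.of fun i j : Fin n => (G₁.dist i j : ℤ)).det
      = (Matrix.of fun i j : Fin n => (G₂.dist i j : ℤ)).det := by
  have conv : ∀ (G : SimpleGraph (Fin n)),
      (Matrix.of fun i j : Fin n => (G.dist i j : ℤ)).det = (bmat G 0).det := by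
    intro G
    have he : (Matrix.of fun i j : Fin n => (G.dist i j : ℤ))
        = (bmat G 0).submatrix (Equiv.sumEmpty (Fin n) (Fin 0)).symm
            (Equiv.sumEmpty (Fin n) (Fin 0)).symm := by
      ext i j
      rfl
    rw [he, Matrix.det_submatrix_equiv_self]
  rw [conv G₁, conv G₂]
  exact bmat_det_eq n 0 G₁ G₂ h₁ h₂ (by simp) (by simp)
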